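/- arXiv:1711.05384 — 3 statements merged into one kernel-verified Lean document; each statement's English description precedes it below -/
import Mathlib

section
/- Stein-type estimate at an optimizing measure: let Θ be a set of probability measures on ℝ, N[φ] = sup_{μ∈Θ}∫φdμ, with N[x] = N[−x] = 0 and N[|x|^{2+α}] < ∞ for some α ∈ (0,1). Define G(a) = (1/2)N[a x²]. If φ ∈ C²_b(ℝ) with [φ'']_α < ∞ and μ ∈ Θ attains the supremum, i.e. ∫φ dμ = N[φ], then |∫ ((x/2)φ'(x) − G(φ''(x))) dμ(x)| ≤ 2[φ'']_α · N[|x|^{2+α}]. -/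
open MeasureTheory

lemma aux_rpow_le (p q x : ℝ) (hp : 0 ≤ p) (hpq : p ≤ q) : |x| ^ p ≤ 1 + |x| ^ q := by
  rcases le_total |x| 1 with h | h
  · have h1 : |x| ^ p ≤ 1 := Real.rpow_le_one (abs_nonneg x) h hp
    have h2 : (0:ℝ) ≤ |x| ^ q := Real.rpow_nonneg (abs_nonneg x) q
    linarith
  · have h1 : |x| ^ p ≤ |x| ^ q := Real.rpow_le_rpow_of_exponent_le h hpq
    linarith

lemma aux_integrable (ν : Measure ℝ) [IsProbabilityMeasure ν] (q : ℝ)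
    (hi : Integrable (fun x => |x| ^ q) ν) (f : ℝ → ℝ) (hf : Continuous f) (c₀ c₁ : ℝ)
    (hb : ∀ x, |f x| ≤ c₀ + c₁ * |x| ^ q) : Integrable f ν := by
  have hbi : Integrable (fun x => c₀ + c₁ * |x| ^ q) ν :=
    (integrable_const c₀).add (hi.const_mul c₁)
  refine hbi.mono hf.aestronglyMeasurable (Filter.Eventually.of_forall fun x => ?_)
  rw [Real.norm_eq_abs, Real.norm_eq_abs]
  exact (hb x).trans (le_abs_self _)

lemma aux_abs_integral (ν : Measure ℝ) [IsProbabilityMeasure ν] (q : ℝ)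
    (hi : Integrable (fun x => |x| ^ q) ν) (f : ℝ → ℝ) (hf : Continuous f) (c₀ c₁ : ℝ)
    (hb : ∀ x, |f x| ≤ c₀ + c₁ * |x| ^ q) :
    |∫ x, f x ∂ν| ≤ c₀ + c₁ * ∫ x, |x| ^ q ∂ν := by
  have hfi : Integrable f ν := aux_integrable ν q hi f hf c₀ c₁ hb
  calc |∫ x, f x ∂ν| ≤ ∫ x, |f x| ∂ν := by
        simpa [Real.norm_eq_abs] using norm_integral_le_integral_norm (μ := ν) f
    _ ≤ ∫ x, (c₀ + c₁ * |x| ^ q) ∂ν := by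
        refine integral_mono hfi.abs ((integrable_const c₀).add (hi.const_mul c₁)) ?_
        exact hb
    _ = c₀ + c₁ * ∫ x, |x| ^ q ∂ν := by
        rw [integral_add (integrable_const c₀) (hi.const_mul c₁), integral_const,
          integral_const_mul, probReal_univ]
        simp

lemma aux_taylor (h h' : ℝ → ℝ) (hder : ∀ t, HasDerivAt h (h' t) t) (hcont : Continuous h')
    (h0 : h 0 = 0) (p C : ℝ) (hp : 0 < p) (hC : 0 ≤ C) (hb : ∀ t, |h' t| ≤ C * |t| ^ p)
    (x : ℝ) : |h x| ≤ C / (p + 1) * |x| ^ (p + 1) := by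
  have key : ∀ t : ℝ, HasDerivAt (fun s => h (s * x)) (x * h' (t * x)) t := by
    intro t
    have := (hder (t * x)).comp t ((hasDerivAt_id t).mul_const x)
    simpa [mul_comm, Function.comp_def] using this
  have hint : IntervalIntegrable (fun t => x * h' (t * x)) volume 0 1 :=
    (continuous_const.mul (hcont.comp ((continuous_id.mul continuous_const)))).intervalIntegrable 0 1
  have ftc : ∫ t in (0:ℝ)..1, x * h' (t * x) = h x := by
    have := intervalIntegral.integral_eq_sub_of_hasDerivAt
      (f := fun s => h (s * x)) (f' := fun t => x * h' (t * x)) (fun t _ => key t) hint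
    simpa [h0] using this
  have hgint : IntervalIntegrable (fun t : ℝ => C * |x| ^ (p + 1) * t ^ p) volume 0 1 :=
    ((continuous_const.mul ((continuous_id.rpow_const
      (fun t => Or.inr hp.le)) : Continuous fun t : ℝ => t ^ p))).intervalIntegrable 0 1
  have hbnd : ∀ᵐ t ∂(volume.restrict (Set.uIoc (0:ℝ) 1)),
      ‖x * h' (t * x)‖ ≤ C * |x| ^ (p + 1) * t ^ p := by
    rw [Set.uIoc_of_le (by norm_num : (0:ℝ) ≤ 1)]
    refine (ae_restrict_iff' measurableSet_Ioc).2 (Filter.Eventually.of_forall fun t ht => ?_)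
    have ht0 : 0 < t := ht.1
    have h1 : ‖x * h' (t * x)‖ = |x| * |h' (t * x)| := by
      rw [Real.norm_eq_abs, abs_mul]
    rw [h1]
    have h2 : |h' (t * x)| ≤ C * |t * x| ^ p := hb (t * x)
    have h3 : |t * x| ^ p = t ^ p * |x| ^ p := by
      rw [abs_mul, abs_of_pos ht0, Real.mul_rpow ht0.le (abs_nonneg x)]
    have h4 : |x| * |x| ^ p = |x| ^ (p + 1) := by
      nth_rewrite 1 [← Real.rpow_one |x|]
      rw [← Real.rpow_add' (abs_nonneg x) (by linarith), add_comm]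
    calc |x| * |h' (t * x)| ≤ |x| * (C * (t ^ p * |x| ^ p)) := by
          rw [← h3]; exact mul_le_mul_of_nonneg_left h2 (abs_nonneg x)
      _ = C * (|x| * |x| ^ p) * t ^ p := by ring
      _ = C * |x| ^ (p + 1) * t ^ p := by rw [h4]
  have hmain : ‖∫ t in (0:ℝ)..1, x * h' (t * x)‖ ≤
      |∫ t in (0:ℝ)..1, C * |x| ^ (p + 1) * t ^ p| :=
    intervalIntegral.norm_integral_le_abs_of_norm_le hbnd hgint
  have hval : ∫ t in (0:ℝ)..1, C * |x| ^ (p + 1) * t ^ p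
      = C * |x| ^ (p + 1) * (1 / (p + 1)) := by
    rw [intervalIntegral.integral_const_mul, integral_rpow (Or.inl (by linarith))]
    rw [Real.one_rpow, Real.zero_rpow (by linarith)]
    ring
  rw [ftc, Real.norm_eq_abs] at hmain
  rw [hval] at hmain
  have hnn : (0:ℝ) ≤ C * |x| ^ (p + 1) * (1 / (p + 1)) := by positivity
  rw [abs_of_nonneg hnn] at hmain
  calc |h x| ≤ C * |x| ^ (p + 1) * (1 / (p + 1)) := hmain
    _ = C / (p + 1) * |x| ^ (p + 1) := by ring

lemma aux_jensen (ν : Measure ℝ) [IsProbabilityMeasure ν] (p q NN : ℝ) (hp : 0 < p)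
    (hpq : p < q) (hi : Integrable (fun x => |x| ^ q) ν) (hle : ∫ x, |x| ^ q ∂ν ≤ NN) :
    ∫ x, |x| ^ p ∂ν ≤ NN ^ (p / q) := by
  have hq : 0 < q := hp.trans hpq
  set r := q / p with hr
  have hr1 : 1 ≤ r := (one_le_div hp).2 hpq.le
  have hfi : Integrable (fun x => |x| ^ p) ν :=
    aux_integrable ν q hi _ (continuous_abs.rpow_const fun x => Or.inr hp.le) 1 1
      (fun x => by
        rw [abs_of_nonneg (Real.rpow_nonneg (abs_nonneg x) p), one_mul]
        exact aux_rpow_le p q x hp.le hpq.le)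
  have hpr : p * r = q := by
    rw [hr, mul_comm]; exact div_mul_cancel₀ q hp.ne'
  have hptwise : ∀ x : ℝ, (|x| ^ p) ^ r = |x| ^ q := fun x => by
    rw [← Real.rpow_mul (abs_nonneg x), hpr]
  have hgi : Integrable ((fun y : ℝ => y ^ r) ∘ fun x : ℝ => |x| ^ p) ν := by
    have : ((fun y : ℝ => y ^ r) ∘ fun x : ℝ => |x| ^ p) = fun x : ℝ => |x| ^ q := by
      funext x; exact hptwise x
    rw [this]; exact hi
  have hjen := (convexOn_rpow hr1).map_integral_le (μ := ν)
    ((continuous_id.rpow_const fun y => Or.inr (by linarith)).continuousOn)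
    isClosed_Ici
    (Filter.Eventually.of_forall fun x => Set.mem_Ici.2 (Real.rpow_nonneg (abs_nonneg x) p))
    hfi hgi
  have hjen2 : (∫ x, |x| ^ p ∂ν) ^ r ≤ ∫ x, |x| ^ q ∂ν := by
    refine le_trans hjen (le_of_eq (integral_congr_ae (Filter.Eventually.of_forall fun x => ?_)))
    exact hptwise x
  have hA : 0 ≤ ∫ x, |x| ^ p ∂ν := integral_nonneg fun x => Real.rpow_nonneg (abs_nonneg x) p
  have h1 : (∫ x, |x| ^ p ∂ν) ^ r ≤ NN := hjen2.trans hle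
  have h2 : ((∫ x, |x| ^ p ∂ν) ^ r) ^ (p / q) = ∫ x, |x| ^ p ∂ν := by
    rw [← Real.rpow_mul hA, show r * (p / q) = 1 by
      rw [hr, div_mul_div_comm, mul_comm q p]; exact div_self (by positivity), Real.rpow_one]
  calc ∫ x, |x| ^ p ∂ν = ((∫ x, |x| ^ p ∂ν) ^ r) ^ (p / q) := h2.symm
    _ ≤ NN ^ (p / q) := Real.rpow_le_rpow (Real.rpow_nonneg hA r) h1 (div_nonneg hp.le hq.le)

/-- The supremum sublinear expectation `N[φ] = sup_{μ∈Θ} ∫ φ dμ`. -/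
noncomputable def slExp (Θ : Set (Measure ℝ)) (φ : ℝ → ℝ) : ℝ :=
  sSup ((fun μ => ∫ x, φ x ∂μ) '' Θ)

set_option maxHeartbeats 1000000 in
/-- Stein-type estimate at an optimizing measure:
`|∫ ((x/2)φ'(x) − G(φ''(x))) dμ| ≤ 2[φ'']_α N[|x|^{2+α}]` where `G(a) = (1/2)N[ax²]`. -/
theorem stein_type_estimate (Θ : Set (Measure ℝ)) (hne : Θ.Nonempty)
    (hprob : ∀ μ ∈ Θ, IsProbabilityMeasure μ)
    (α K : ℝ) (hα : α ∈ Set.Ioo (0:ℝ) 1) (hK : 0 ≤ K)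
    (hint : ∀ μ ∈ Θ, Integrable (fun x => |x| ^ (2 + α)) μ)
    (hbdd : BddAbove ((fun μ => ∫ x, |x| ^ (2 + α) ∂μ) '' Θ))
    (hmean : slExp Θ (fun x => x) = 0) (hmean' : slExp Θ (fun x => -x) = 0)
    (φ : ℝ → ℝ) (hφb : ∃ C, ∀ x, |φ x| ≤ C)
    (hd1 : Differentiable ℝ φ) (hd2 : Differentiable ℝ (deriv φ))
    (hH : ∀ x y : ℝ, |deriv (deriv φ) x - deriv (deriv φ) y| ≤ K * |x - y| ^ α)
    (μ : Measure ℝ) (hμ : μ ∈ Θ) (hopt : ∫ x, φ x ∂μ = slExp Θ φ) :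
    |∫ x, (x / 2 * deriv φ x -
        (1/2) * slExp Θ (fun y => deriv (deriv φ) x * y^2)) ∂μ| ≤
      2 * K * slExp Θ (fun x => |x| ^ (2 + α)) := by
  obtain ⟨hα0, hα1⟩ := hα
  haveI hPμ : IsProbabilityMeasure μ := hprob μ hμ
  set q : ℝ := 2 + α with hqdef
  have hq0 : (0:ℝ) < q := by rw [hqdef]; linarith
  set NN := slExp Θ (fun x => |x| ^ q) with hNNdef
  have hNNle : ∀ ν ∈ Θ, ∫ x, |x| ^ q ∂ν ≤ NN :=
    fun ν hν => le_csSup hbdd (Set.mem_image_of_mem _ hν)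
  have hNN0 : 0 ≤ NN := by
    obtain ⟨ν, hν⟩ := hne
    exact le_trans (integral_nonneg fun x => Real.rpow_nonneg (abs_nonneg x) q) (hNNle ν hν)
  clear_value q NN
  -- integrability helpers
  have hInt : ∀ ν ∈ Θ, ∀ f : ℝ → ℝ, Continuous f → ∀ c₀ c₁ : ℝ,
      (∀ x, |f x| ≤ c₀ + c₁ * |x| ^ q) → Integrable f ν := by
    intro ν hν f hf c₀ c₁ hb
    haveI := hprob ν hν
    exact aux_integrable ν q (hint ν hν) f hf c₀ c₁ hb
  have hIabs : ∀ ν ∈ Θ, ∀ f : ℝ → ℝ, Continuous f → ∀ c₀ c₁ : ℝ, 0 ≤ c₁ →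
      (∀ x, |f x| ≤ c₀ + c₁ * |x| ^ q) → |∫ x, f x ∂ν| ≤ c₀ + c₁ * NN := by
    intro ν hν f hf c₀ c₁ hc₁ hb
    haveI := hprob ν hν
    refine le_trans (aux_abs_integral ν q (hint ν hν) f hf c₀ c₁ hb) ?_
    have := mul_le_mul_of_nonneg_left (hNNle ν hν) hc₁
    linarith
  have hq1 : (1:ℝ) ≤ q := by rw [hqdef]; linarith
  have h2q : (2:ℝ) < q := by rw [hqdef]; linarith
  have hsq : ∀ x : ℝ, |x| ^ (2:ℝ) = x ^ 2 := by
    intro x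
    rw [show (2:ℝ) = ((2:ℕ):ℝ) by norm_num, Real.rpow_natCast, sq_abs]
  have hbabs : ∀ x : ℝ, |x| ≤ 1 + 1 * |x| ^ q := by
    intro x
    have h := aux_rpow_le 1 q x one_pos.le hq1
    rw [Real.rpow_one] at h
    linarith
  have hbsq : ∀ x : ℝ, |x ^ 2| ≤ 1 + 1 * |x| ^ q := by
    intro x
    have h := aux_rpow_le 2 q x two_pos.le h2q.le
    rw [hsq] at h
    rw [abs_of_nonneg (sq_nonneg x)]
    linarith
  -- mean zero
  have hmean0 : ∀ ν ∈ Θ, ∫ x, x ∂ν = 0 := by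
    have hBx : BddAbove ((fun ν => ∫ x, x ∂ν) '' Θ) := by
      refine ⟨1 + NN, ?_⟩
      rintro _ ⟨ν, hν, rfl⟩
      have := hIabs ν hν _ continuous_id 1 1 one_pos.le (fun x => by simpa using hbabs x)
      calc ∫ x, x ∂ν ≤ |∫ x, x ∂ν| := le_abs_self _
        _ ≤ 1 + 1 * NN := this
        _ = 1 + NN := by ring
    have hBx' : BddAbove ((fun ν => ∫ x, -x ∂ν) '' Θ) := by
      refine ⟨1 + NN, ?_⟩
      rintro _ ⟨ν, hν, rfl⟩
      have := hIabs ν hν _ (continuous_neg) 1 1 one_pos.le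
        (fun x => by simpa [abs_neg] using hbabs x)
      calc ∫ x, -x ∂ν ≤ |∫ x, -x ∂ν| := le_abs_self _
        _ ≤ 1 + 1 * NN := this
        _ = 1 + NN := by ring
    intro ν hν
    have h1 : ∫ x, x ∂ν ≤ 0 := by
      rw [← hmean]; exact le_csSup hBx (Set.mem_image_of_mem _ hν)
    have h2 : ∫ x, -x ∂ν ≤ 0 := by
      rw [← hmean']; exact le_csSup hBx' (Set.mem_image_of_mem _ hν)
    rw [integral_neg] at h2
    linarith
  -- second derivative continuity
  have hf''cont : Continuous (deriv (deriv φ)) := by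
    rw [continuous_iff_continuousAt]
    intro x
    have tends : Filter.Tendsto (fun y => K * |y - x| ^ α) (nhds x) (nhds 0) := by
      have hc : Continuous (fun y : ℝ => K * |y - x| ^ α) :=
        continuous_const.mul (((continuous_id.sub continuous_const).abs).rpow_const
          (fun y => Or.inr hα0.le))
      have := hc.tendsto x
      simpa [Real.zero_rpow hα0.ne'] using this
    refine tendsto_iff_dist_tendsto_zero.2 ?_
    refine squeeze_zero (fun y => dist_nonneg) (fun y => ?_) tends
    rw [Real.dist_eq]
    exact hH y x
  -- Taylor bounds
  have hT1 : ∀ x : ℝ, |deriv φ x - deriv φ 0 - deriv (deriv φ) 0 * x| ≤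
      K / (α + 1) * |x| ^ (α + 1) := by
    intro x
    refine aux_taylor (fun t => deriv φ t - deriv φ 0 - deriv (deriv φ) 0 * t)
      (fun t => deriv (deriv φ) t - deriv (deriv φ) 0) (fun t => ?_)
      (hf''cont.sub continuous_const) (by simp) α K hα0 hK (fun t => ?_) x
    · have := ((hd2 t).hasDerivAt.sub_const (deriv φ 0)).sub
        ((hasDerivAt_id t).const_mul (deriv (deriv φ) 0))
      exact this.congr_deriv (by ring)
    · simpa using hH t 0
  have hT2 : ∀ x : ℝ, |φ x - φ 0 - deriv φ 0 * x - deriv (deriv φ) 0 / 2 * x ^ 2| ≤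
      (K / (α + 1)) / ((α + 1) + 1) * |x| ^ ((α + 1) + 1) := by
    intro x
    refine aux_taylor (fun t => φ t - φ 0 - deriv φ 0 * t - deriv (deriv φ) 0 / 2 * t ^ 2)
      (fun t => deriv φ t - deriv φ 0 - deriv (deriv φ) 0 * t) (fun t => ?_)
      ((hd2.continuous.sub continuous_const).sub (continuous_const.mul continuous_id))
      (by simp) (α + 1) (K / (α + 1)) (by linarith) (by positivity) hT1 x
    have := (((hd1 t).hasDerivAt.sub_const (φ 0)).sub
        ((hasDerivAt_id t).const_mul (deriv φ 0))).sub
        ((hasDerivAt_pow 2 t).const_mul (deriv (deriv φ) 0 / 2))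
    exact this.congr_deriv (by simp; ring)
  have hexp : (α + 1) + 1 = q := by rw [hqdef]; ring
  have hxq : ∀ x : ℝ, |x| * |x| ^ (α + 1) = |x| ^ q := by
    intro x
    have h := Real.rpow_add' (abs_nonneg x) (show (1:ℝ) + (α + 1) ≠ 0 by positivity)
    rw [Real.rpow_one] at h
    rw [← h]
    congr 1
    rw [hqdef]; ring
  -- the G function
  set G : ℝ → ℝ := fun a => slExp Θ (fun y => a * y ^ 2) with hGdef
  have hGrepr : ∀ a : ℝ, G a = sSup ((fun ν => ∫ y, a * y ^ 2 ∂ν) '' Θ) := fun a => rfl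
  have hGgoal : (fun x => x / 2 * deriv φ x -
      1 / 2 * slExp Θ (fun y => deriv (deriv φ) x * y ^ 2)) =
      fun x => x / 2 * deriv φ x - 1 / 2 * G (deriv (deriv φ) x) := rfl
  clear_value G
  have hGint : ∀ a : ℝ, ∀ ν : Measure ℝ, ∫ y, a * y ^ 2 ∂ν = a * ∫ y, y ^ 2 ∂ν :=
    fun a ν => integral_const_mul a _
  set Sb : ℝ := NN ^ ((2:ℝ) / q) with hSbdef
  have hSb0 : 0 ≤ Sb := Real.rpow_nonneg hNN0 _
  clear_value Sb
  have hVle : ∀ ν ∈ Θ, ∫ y, y ^ 2 ∂ν ≤ Sb := by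
    intro ν hν
    haveI := hprob ν hν
    have := aux_jensen ν 2 q NN two_pos h2q (hint ν hν) (hNNle ν hν)
    rw [hSbdef]
    refine le_trans (le_of_eq ?_) this
    exact integral_congr_ae (Filter.Eventually.of_forall fun x => (hsq x).symm)
  have hV0 : ∀ ν : Measure ℝ, 0 ≤ ∫ y, y ^ 2 ∂ν :=
    fun ν => integral_nonneg fun y => sq_nonneg y
  have hGbdd : ∀ a : ℝ, BddAbove ((fun ν => ∫ y, a * y ^ 2 ∂ν) '' Θ) := by
    intro a
    refine ⟨|a| * Sb, ?_⟩
    rintro _ ⟨ν, hν, rfl⟩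
    simp only [hGint]
    calc a * ∫ y, y ^ 2 ∂ν ≤ |a| * ∫ y, y ^ 2 ∂ν :=
          mul_le_mul_of_nonneg_right (le_abs_self a) (hV0 ν)
      _ ≤ |a| * Sb := mul_le_mul_of_nonneg_left (hVle ν hν) (abs_nonneg a)
  have hGge : ∀ a : ℝ, ∀ ν ∈ Θ, a * ∫ y, y ^ 2 ∂ν ≤ G a := by
    intro a ν hν
    rw [hGrepr, ← hGint]
    exact le_csSup (hGbdd a) (Set.mem_image_of_mem _ hν)
  have hGle2 : ∀ a b : ℝ, G a ≤ G b + Sb * |a - b| := by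
    intro a b
    rw [hGrepr]
    refine csSup_le (Set.Nonempty.image _ hne) ?_
    rintro _ ⟨ν, hν, rfl⟩
    simp only [hGint]
    have h1 : b * ∫ y, y ^ 2 ∂ν ≤ G b := hGge b ν hν
    have h2 : (a - b) * ∫ y, y ^ 2 ∂ν ≤ |a - b| * Sb := by
      calc (a - b) * ∫ y, y ^ 2 ∂ν ≤ |a - b| * ∫ y, y ^ 2 ∂ν :=
            mul_le_mul_of_nonneg_right (le_abs_self _) (hV0 ν)
        _ ≤ |a - b| * Sb := mul_le_mul_of_nonneg_left (hVle ν hν) (abs_nonneg _)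
    nlinarith [hV0 ν]
  have hGlip : ∀ a b : ℝ, |G a - G b| ≤ Sb * |a - b| := by
    intro a b
    rw [abs_sub_le_iff]
    constructor
    · linarith [hGle2 a b]
    · have := hGle2 b a
      rw [abs_sub_comm] at this
      linarith
  have hGcont : Continuous G := by
    have : LipschitzWith (Real.toNNReal Sb) G := by
      refine LipschitzWith.of_dist_le_mul fun a b => ?_
      rw [Real.dist_eq, Real.dist_eq, Real.coe_toNNReal Sb hSb0]
      exact hGlip a b
    exact this.continuous
  -- constants
  set d : ℝ := deriv φ 0 with hddef
  set c : ℝ := deriv (deriv φ) 0 with hcdef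
  set c₂ : ℝ := (K / (α + 1)) / ((α + 1) + 1) with hc₂def
  have hc₂0 : 0 ≤ c₂ := by rw [hc₂def]; positivity
  clear_value c₂
  have hf''b : ∀ x : ℝ, |deriv (deriv φ) x - c| ≤ K * |x| ^ α := fun x => by
    rw [hcdef]
    simpa using hH x 0
  clear_value d c
  -- decomposition functions
  set a1 : ℝ → ℝ := fun x => x / 2 * (deriv φ x - d - c * x) with ha1def
  set b1 : ℝ → ℝ := fun x => G (deriv (deriv φ) x) - G c with hb1def
  clear_value a1 b1
  have ha1cont : Continuous a1 := by
    rw [ha1def]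
    exact (continuous_id.div_const 2).mul
      ((hd2.continuous.sub continuous_const).sub (continuous_const.mul continuous_id))
  have ha1b : ∀ x : ℝ, |a1 x| ≤ 0 + K / (α + 1) / 2 * |x| ^ q := by
    intro x
    rw [ha1def]
    have h1 : |x / 2 * (deriv φ x - d - c * x)| = |x| / 2 * |deriv φ x - d - c * x| := by
      rw [abs_mul, abs_div]
      norm_num
    rw [h1]
    calc |x| / 2 * |deriv φ x - d - c * x| ≤ |x| / 2 * (K / (α + 1) * |x| ^ (α + 1)) :=
          mul_le_mul_of_nonneg_left (hT1 x) (by positivity)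
      _ = K / (α + 1) / 2 * (|x| * |x| ^ (α + 1)) := by ring
      _ = K / (α + 1) / 2 * |x| ^ q := by rw [hxq]
      _ = 0 + K / (α + 1) / 2 * |x| ^ q := by ring
  have hIa1 : Integrable a1 μ := hInt μ hμ a1 ha1cont 0 (K / (α + 1) / 2) ha1b
  have hIx : Integrable (fun x : ℝ => x) μ := hInt μ hμ _ continuous_id 1 1 hbabs
  have hIx2 : Integrable (fun x : ℝ => x ^ 2) μ := hInt μ hμ _ (continuous_pow 2) 1 1 hbsq
  have hb1bound : ∀ x : ℝ, |b1 x| ≤ Sb * K + Sb * K * |x| ^ q := by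
    intro x
    rw [hb1def]
    calc |G (deriv (deriv φ) x) - G c| ≤ Sb * |deriv (deriv φ) x - c| := hGlip _ _
      _ ≤ Sb * (K * |x| ^ α) := mul_le_mul_of_nonneg_left (hf''b x) hSb0
      _ ≤ Sb * (K * (1 + |x| ^ q)) := by
          refine mul_le_mul_of_nonneg_left (mul_le_mul_of_nonneg_left ?_ hK) hSb0
          exact aux_rpow_le α q x hα0.le (by linarith)
      _ = Sb * K + Sb * K * |x| ^ q := by ring
  have hIb1 : Integrable b1 μ := by
    refine hInt μ hμ b1 ?_ (Sb * K) (Sb * K) hb1bound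
    rw [hb1def]
    exact (hGcont.comp hf''cont).sub continuous_const
  -- integral of the decomposition
  have hdecomp : (fun x => x / 2 * deriv φ x - 1 / 2 * G (deriv (deriv φ) x)) =
      fun x => a1 x + (d / 2 * x + (c / 2 * x ^ 2 + (-(1 / 2) * b1 x + -(1 / 2) * G c))) := by
    funext x
    rw [ha1def, hb1def]
    ring
  have hI4 : Integrable (fun x : ℝ => -(1 / 2) * b1 x + -(1 / 2) * G c) μ := by
    exact (hIb1.const_mul _).add (integrable_const _)
  have hI3 : Integrable (fun x : ℝ => c / 2 * x ^ 2 + (-(1 / 2) * b1 x + -(1 / 2) * G c)) μ := by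
    exact (hIx2.const_mul _).add hI4
  have hI2 : Integrable (fun x : ℝ => d / 2 * x +
      (c / 2 * x ^ 2 + (-(1 / 2) * b1 x + -(1 / 2) * G c))) μ := by
    exact (hIx.const_mul _).add hI3
  have hIdx : Integrable (fun x : ℝ => d / 2 * x) μ := hIx.const_mul _
  have hIcx2 : Integrable (fun x : ℝ => c / 2 * x ^ 2) μ := hIx2.const_mul _
  have hIbb : Integrable (fun x : ℝ => -(1 / 2) * b1 x) μ := hIb1.const_mul _
  have hsum : ∫ x, (x / 2 * deriv φ x - 1 / 2 * G (deriv (deriv φ) x)) ∂μ =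
      (∫ x, a1 x ∂μ) + (c / 2 * ∫ x, x ^ 2 ∂μ +
        (-(1 / 2) * ∫ x, b1 x ∂μ + -(1 / 2) * G c)) := by
    rw [hdecomp, integral_add hIa1 hI2, integral_add hIdx hI3, integral_add hIcx2 hI4,
      integral_add hIbb (integrable_const _), integral_const_mul, integral_const_mul,
      integral_const_mul, integral_const, probReal_univ, hmean0 μ hμ]
    simp
  -- bound on ∫ a1
  have hBa1 : |∫ x, a1 x ∂μ| ≤ K / (α + 1) / 2 * NN := by
    have := hIabs μ hμ a1 ha1cont 0 (K / (α + 1) / 2) (by positivity) ha1b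
    linarith
  -- bound on ∫ b1
  have hBb1 : |∫ x, b1 x ∂μ| ≤ K * NN := by
    have hIalpha : Integrable (fun x : ℝ => |x| ^ α) μ := by
      refine hInt μ hμ _ (continuous_abs.rpow_const fun x => Or.inr hα0.le) 1 1 fun x => ?_
      rw [abs_of_nonneg (Real.rpow_nonneg (abs_nonneg x) α), one_mul]
      exact aux_rpow_le α q x hα0.le (by linarith)
    have hJα : ∫ x, |x| ^ α ∂μ ≤ NN ^ (α / q) :=
      aux_jensen μ α q NN hα0 (by linarith) (hint μ hμ) (hNNle μ hμ)
    have step1 : |∫ x, b1 x ∂μ| ≤ Sb * K * ∫ x, |x| ^ α ∂μ := by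
      calc |∫ x, b1 x ∂μ| ≤ ∫ x, |b1 x| ∂μ := by
            simpa [Real.norm_eq_abs] using norm_integral_le_integral_norm (μ := μ) b1
        _ ≤ ∫ x, Sb * K * |x| ^ α ∂μ := by
            refine integral_mono hIb1.abs (hIalpha.const_mul (Sb * K)) fun x => ?_
            rw [hb1def]
            calc |G (deriv (deriv φ) x) - G c| ≤ Sb * |deriv (deriv φ) x - c| := hGlip _ _
              _ ≤ Sb * (K * |x| ^ α) := mul_le_mul_of_nonneg_left (hf''b x) hSb0
              _ = Sb * K * |x| ^ α := by ring
        _ = Sb * K * ∫ x, |x| ^ α ∂μ := integral_const_mul _ _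
    have step2 : Sb * K * ∫ x, |x| ^ α ∂μ ≤ Sb * K * NN ^ (α / q) :=
      mul_le_mul_of_nonneg_left hJα (by positivity)
    have hexps : (2:ℝ) / q + α / q = 1 := by
      rw [← add_div, hqdef]
      exact div_self (by rw [← hqdef]; exact hq0.ne')
    have hmulNN : Sb * NN ^ (α / q) = NN := by
      rw [hSbdef, ← Real.rpow_add' hNN0 (by rw [hexps]; norm_num), hexps, Real.rpow_one]
    calc |∫ x, b1 x ∂μ| ≤ Sb * K * NN ^ (α / q) := step1.trans step2
      _ = K * (Sb * NN ^ (α / q)) := by ring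
      _ = K * NN := by rw [hmulNN]
  -- the optimality bound on the constant term
  have hTint : ∀ ν ∈ Θ, |∫ x, φ x ∂ν - (φ 0 + c / 2 * ∫ y, y ^ 2 ∂ν)| ≤ c₂ * NN := by
    intro ν hν
    haveI := hprob ν hν
    have hrrcont : Continuous (fun x : ℝ => φ x - φ 0 - d * x - c / 2 * x ^ 2) :=
      ((hd1.continuous.sub continuous_const).sub (continuous_const.mul continuous_id)).sub
        (continuous_const.mul (continuous_pow 2))
    have hrrb : ∀ x : ℝ, |φ x - φ 0 - d * x - c / 2 * x ^ 2| ≤ 0 + c₂ * |x| ^ q := by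
      intro x
      have h := hT2 x
      rw [hexp] at h
      linarith
    have hIφν : Integrable φ ν := by
      obtain ⟨C, hC⟩ := hφb
      refine hInt ν hν φ hd1.continuous C 0 fun x => ?_
      simpa using hC x
    have hIxν : Integrable (fun x : ℝ => x) ν := hInt ν hν _ continuous_id 1 1 hbabs
    have hIx2ν : Integrable (fun x : ℝ => x ^ 2) ν := hInt ν hν _ (continuous_pow 2) 1 1 hbsq
    have hIdxν : Integrable (fun x : ℝ => d * x) ν := hIxν.const_mul _
    have hIcx2ν : Integrable (fun x : ℝ => c / 2 * x ^ 2) ν := hIx2ν.const_mul _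
    have hA1 : Integrable (fun x : ℝ => φ x - φ 0) ν := by
      exact hIφν.sub (integrable_const _)
    have hA2 : Integrable (fun x : ℝ => φ x - φ 0 - d * x) ν := by
      exact hA1.sub hIdxν
    have hsplit : ∫ x, (φ x - φ 0 - d * x - c / 2 * x ^ 2) ∂ν =
        ∫ x, φ x ∂ν - φ 0 - d * 0 - c / 2 * ∫ y, y ^ 2 ∂ν := by
      rw [integral_sub hA2 hIcx2ν, integral_sub hA1 hIdxν,
        integral_sub hIφν (integrable_const _),
        integral_const_mul, integral_const_mul, integral_const, probReal_univ, hmean0 ν hν]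
      simp
    have habs := hIabs ν hν _ hrrcont 0 c₂ hc₂0 hrrb
    rw [hsplit, zero_add] at habs
    rw [show (∫ x, φ x ∂ν - φ 0 - d * 0 - c / 2 * ∫ y, y ^ 2 ∂ν) =
      (∫ x, φ x ∂ν - (φ 0 + c / 2 * ∫ y, y ^ 2 ∂ν)) from by ring] at habs
    exact habs
  have hφle : ∀ ν ∈ Θ, ∫ x, φ x ∂ν ≤ ∫ x, φ x ∂μ := by
    obtain ⟨C, hC⟩ := hφb
    intro ν hν
    rw [hopt]
    refine le_csSup ⟨C, ?_⟩ (Set.mem_image_of_mem _ hν)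
    rintro _ ⟨ν', hν', rfl⟩
    have := hIabs ν' hν' φ hd1.continuous C 0 le_rfl fun x => by simpa using hC x
    calc ∫ x, φ x ∂ν' ≤ |∫ x, φ x ∂ν'| := le_abs_self _
      _ ≤ C + 0 * NN := this
      _ = C := by ring
  have hkey : ∀ ν ∈ Θ, c * ∫ y, y ^ 2 ∂ν ≤ c * ∫ y, y ^ 2 ∂μ + 4 * (c₂ * NN) := by
    intro ν hν
    have h1 := abs_le.1 (hTint ν hν)
    have h2 := abs_le.1 (hTint μ hμ)
    have h3 := hφle ν hν
    have e1 : c / 2 * ∫ y, y ^ 2 ∂ν ≤ ∫ x, φ x ∂ν - φ 0 + c₂ * NN := by linarith [h1.1]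
    have e2 : ∫ x, φ x ∂μ - φ 0 ≤ c / 2 * ∫ y, y ^ 2 ∂μ + c₂ * NN := by linarith [h2.2]
    linarith
  have hGc_le : G c ≤ c * ∫ y, y ^ 2 ∂μ + 4 * (c₂ * NN) := by
    rw [hGrepr]
    refine csSup_le (Set.Nonempty.image _ hne) ?_
    rintro _ ⟨ν, hν, rfl⟩
    simp only [hGint]
    exact hkey ν hν
  have hGc_ge : c * ∫ y, y ^ 2 ∂μ ≤ G c := hGge c μ hμ
  have hc₂NN : (0:ℝ) ≤ c₂ * NN := mul_nonneg hc₂0 hNN0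
  have hCbound : |c / 2 * ∫ x, x ^ 2 ∂μ + -(1 / 2) * G c| ≤ 2 * (c₂ * NN) := by
    rw [abs_le]
    constructor
    · linarith
    · linarith
  -- putting everything together
  rw [hGgoal, hsum]
  have l1 := (abs_le.1 hBa1).1
  have r1 := (abs_le.1 hBa1).2
  have l2 := (abs_le.1 hBb1).1
  have r2 := (abs_le.1 hBb1).2
  have l3 := (abs_le.1 hCbound).1
  have r3 := (abs_le.1 hCbound).2
  have e1 : K / (α + 1) / 2 * NN ≤ K / 2 * NN := by
    have h := div_le_self hK (show (1:ℝ) ≤ α + 1 by linarith)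
    have : K / (α + 1) / 2 ≤ K / 2 := by linarith
    exact mul_le_mul_of_nonneg_right this hNN0
  have e2 : 2 * (c₂ * NN) ≤ K * NN := by
    have t1 : K / (α + 1) ≤ K := div_le_self hK (by linarith)
    have t2 : c₂ ≤ K / (α + 1) / 2 := by
      rw [hc₂def]
      exact div_le_div_of_nonneg_left (by positivity) two_pos (by linarith)
    have t3 : c₂ ≤ K / 2 := by linarith
    have := mul_le_mul_of_nonneg_right t3 hNN0
    linarith
  rw [abs_le]
  constructor
  · linarith
  · linarith
end

section
/- Key intermediate estimate: under the assumptions of the Stein-type estimate (N[x]=N[−x]=0, μ attains N[φ]), one has |(1/2)φ''(0)∫x²dμ − G(φ''(0))| ≤ [φ'']_α · N[|x|^{2+α}]. -/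
open MeasureTheory

lemma aux_ftc0 (C β : ℝ) (hC : 0 ≤ C) (hβ : 0 < β) (f : ℝ → ℝ)
    (hf : Differentiable ℝ f) (hf' : Continuous (deriv f)) (h0 : f 0 = 0)
    (hbd : ∀ t, |deriv f t| ≤ C * |t| ^ β) (x : ℝ) (hx : 0 ≤ x) :
    |f x| ≤ C / (β + 1) * |x| ^ (β + 1) := by
  have hfi : f x - f 0 = ∫ t in (0:ℝ)..x, deriv f t :=
    (intervalIntegral.integral_deriv_eq_sub (fun t _ => hf t)
      (hf'.intervalIntegrable 0 x)).symm
  have hib : IntervalIntegrable (fun t => C * t ^ β) volume 0 x :=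
    (intervalIntegral.intervalIntegrable_rpow' (by linarith)).const_mul C
  have h1 : |f x| ≤ ∫ t in (0:ℝ)..x, C * t ^ β := by
    rw [show f x = f x - f 0 by rw [h0]; ring, hfi]
    refine (intervalIntegral.abs_integral_le_integral_abs hx).trans ?_
    refine intervalIntegral.integral_mono_on hx ((hf'.abs).intervalIntegrable 0 x) hib ?_
    intro t ht
    have := hbd t
    rwa [abs_of_nonneg ht.1] at this
  have h2 : ∫ t in (0:ℝ)..x, C * t ^ β = C / (β + 1) * x ^ (β + 1) := by
    rw [intervalIntegral.integral_const_mul, integral_rpow (Or.inl (by linarith))]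
    rw [Real.zero_rpow (by linarith)]
    ring
  rw [abs_of_nonneg hx]
  linarith [h1, h2.le, h2.ge]

lemma aux_ftc (C β : ℝ) (hC : 0 ≤ C) (hβ : 0 < β) (f : ℝ → ℝ)
    (hf : Differentiable ℝ f) (hf' : Continuous (deriv f)) (h0 : f 0 = 0)
    (hbd : ∀ t, |deriv f t| ≤ C * |t| ^ β) (x : ℝ) :
    |f x| ≤ C / (β + 1) * |x| ^ (β + 1) := by
  rcases le_or_gt 0 x with hx | hx
  · exact aux_ftc0 C β hC hβ f hf hf' h0 hbd x hx
  · set g : ℝ → ℝ := fun t => f (-t) with hg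
    have hgd : ∀ t, HasDerivAt g (-(deriv f (-t))) t := by
      intro t
      have h1 : HasDerivAt f (deriv f (-t)) (-t) := (hf (-t)).hasDerivAt
      have h2 : HasDerivAt (fun t : ℝ => -t) (-1) t := (hasDerivAt_neg t)
      exact (h1.comp t h2).congr_deriv (by ring)
    have hgderiv : deriv g = fun t => -(deriv f (-t)) := by
      funext t; exact (hgd t).deriv
    have := aux_ftc0 C β hC hβ g
      (fun t => (hgd t).differentiableAt)
      (by rw [hgderiv]; exact (hf'.comp continuous_neg).neg)
      (by simp [hg, h0])
      (by intro t; rw [hgderiv]; simpa using hbd (-t))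
      (-x) (by linarith)
    simpa [hg] using this

lemma taylor_bound (α K : ℝ) (hα : α ∈ Set.Ioo (0:ℝ) 1) (hK : 0 ≤ K)
    (φ : ℝ → ℝ) (hd1 : Differentiable ℝ φ) (hd2 : Differentiable ℝ (deriv φ))
    (hH : ∀ x y : ℝ, |deriv (deriv φ) x - deriv (deriv φ) y| ≤ K * |x - y| ^ α)
    (x : ℝ) :
    |φ x - φ 0 - deriv φ 0 * x - 1/2 * deriv (deriv φ) 0 * x ^ 2| ≤
      K / 2 * |x| ^ (2 + α) := by
  obtain ⟨hα0, hα1⟩ := hα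
  set c := deriv (deriv φ) 0 with hc
  -- continuity of the second derivative from the Hölder bound
  have hcont2 : Continuous (deriv (deriv φ)) := by
    rw [continuous_iff_continuousAt]
    intro x₀
    rw [ContinuousAt, tendsto_iff_norm_sub_tendsto_zero]
    have hg : Filter.Tendsto (fun y : ℝ => K * |y - x₀| ^ α) (nhds x₀) (nhds 0) := by
      have h1 : Filter.Tendsto (fun y : ℝ => |y - x₀|) (nhds x₀) (nhds 0) := by
        have hc' : Continuous (fun y : ℝ => |y - x₀|) :=
          (continuous_id.sub continuous_const).abs
        simpa using hc'.tendsto x₀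
      have h2 : Filter.Tendsto (fun t : ℝ => t ^ α) (nhds 0) (nhds 0) := by
        have := (Real.continuousAt_rpow_const 0 α (Or.inr hα0.le)).tendsto
        simpa [Real.zero_rpow hα0.ne'] using this
      have := (h2.comp h1).const_mul K
      simpa using this
    refine squeeze_zero (fun y => abs_nonneg _) (fun y => ?_) hg
    simpa [Real.norm_eq_abs] using hH y x₀
  -- first step: bound on g1 = φ' - φ'(0) - c x
  set g1 : ℝ → ℝ := fun t => deriv φ t - deriv φ 0 - c * t with hg1
  have hg1d : ∀ t, HasDerivAt g1 (deriv (deriv φ) t - c) t := by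
    intro t
    have h1 : HasDerivAt (fun t => deriv φ t - deriv φ 0) (deriv (deriv φ) t) t :=
      ((hd2 t).hasDerivAt).sub_const _
    have h2 : HasDerivAt (fun t : ℝ => c * t) c t := by
      simpa using (hasDerivAt_id t).const_mul c
    exact h1.sub h2
  have hg1deriv : deriv g1 = fun t => deriv (deriv φ) t - c := by
    funext t; exact (hg1d t).deriv
  have hstep1 : ∀ t, |g1 t| ≤ K * |t| ^ (α + 1) := by
    intro t
    have := aux_ftc K α hK hα0 g1 (fun t => (hg1d t).differentiableAt)
      (by rw [hg1deriv]; exact hcont2.sub continuous_const)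
      (by simp [hg1]) (fun t => by
        rw [hg1deriv]; simpa using hH t 0) t
    refine this.trans ?_
    have h1 : K / (α + 1) ≤ K := by
      rw [div_le_iff₀ (by linarith)]; nlinarith
    exact mul_le_mul_of_nonneg_right h1 (Real.rpow_nonneg (abs_nonneg t) _)
  -- second step
  set g : ℝ → ℝ := fun t => φ t - φ 0 - deriv φ 0 * t - 1/2 * c * t ^ 2 with hg
  have hgd : ∀ t, HasDerivAt g (g1 t) t := by
    intro t
    have h1 : HasDerivAt (fun t => φ t - φ 0) (deriv φ t) t := ((hd1 t).hasDerivAt).sub_const _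
    have h2 : HasDerivAt (fun t : ℝ => deriv φ 0 * t) (deriv φ 0) t := by
      simpa using (hasDerivAt_id t).const_mul (deriv φ 0)
    have h3 : HasDerivAt (fun t : ℝ => 1/2 * c * t ^ 2) (1/2 * c * (2 * t)) t := by
      simpa using (hasDerivAt_pow 2 t).const_mul (1/2 * c)
    have := (h1.sub h2).sub h3
    refine HasDerivAt.congr_deriv this ?_
    simp [hg1]; ring
  have hgderiv : deriv g = g1 := by funext t; exact (hgd t).deriv
  have := aux_ftc K (α + 1) hK (by linarith) g (fun t => (hgd t).differentiableAt)
    (by rw [hgderiv]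
        exact ((hd2.continuous.sub continuous_const).sub (continuous_const.mul continuous_id)))
    (by simp [hg]) (fun t => by rw [hgderiv]; exact hstep1 t) x
  have heq : |x| ^ (α + 1 + 1) = |x| ^ (2 + α) := by ring_nf
  rw [heq] at this
  refine this.trans ?_
  have h1 : K / (α + 1 + 1) ≤ K / 2 := by
    apply div_le_div_of_nonneg_left hK <;> linarith
  exact mul_le_mul_of_nonneg_right h1 (Real.rpow_nonneg (abs_nonneg x) _)

lemma pt_abs_le {α : ℝ} (hα : 0 < α) (y : ℝ) : |y| ≤ 1 + |y| ^ (2 + α) := by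
  rcases le_or_gt (|y|) 1 with h | h
  · have : (0:ℝ) ≤ |y| ^ (2 + α) := Real.rpow_nonneg (abs_nonneg y) _
    linarith
  · calc |y| = |y| ^ (1:ℝ) := (Real.rpow_one _).symm
      _ ≤ |y| ^ (2 + α) := Real.rpow_le_rpow_of_exponent_le h.le (by linarith)
      _ ≤ 1 + |y| ^ (2 + α) := by linarith

lemma pt_sq_le {α : ℝ} (hα : 0 < α) (y : ℝ) : y ^ 2 ≤ 1 + |y| ^ (2 + α) := by
  have hsq : y ^ 2 = |y| ^ ((2:ℕ):ℝ) := by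
    rw [Real.rpow_natCast]; simp [sq_abs]
  rcases le_or_gt (|y|) 1 with h | h
  · have hr : (0:ℝ) ≤ |y| ^ (2 + α) := Real.rpow_nonneg (abs_nonneg y) _
    calc y ^ 2 = |y| ^ ((2:ℕ):ℝ) := hsq
      _ ≤ 1 := Real.rpow_le_one (abs_nonneg y) h (by norm_num)
      _ ≤ 1 + |y| ^ (2 + α) := by linarith
  · calc y ^ 2 = |y| ^ ((2:ℕ):ℝ) := hsq
      _ ≤ |y| ^ (2 + α) := Real.rpow_le_rpow_of_exponent_le h.le (by push_cast; linarith)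
      _ ≤ 1 + |y| ^ (2 + α) := by linarith


/-- key intermediate estimate
`|(1/2)φ''(0)∫x²dμ − G(φ''(0))| ≤ [φ'']_α N[|x|^{2+α}]` at an optimizing measure `μ`. -/
theorem stein_intermediate_estimate (Θ : Set (Measure ℝ)) (hne : Θ.Nonempty)
    (hprob : ∀ μ ∈ Θ, IsProbabilityMeasure μ)
    (α K : ℝ) (hα : α ∈ Set.Ioo (0:ℝ) 1) (hK : 0 ≤ K)
    (hint : ∀ μ ∈ Θ, Integrable (fun x => |x| ^ (2 + α)) μ)
    (hbdd : BddAbove ((fun μ => ∫ x, |x| ^ (2 + α) ∂μ) '' Θ))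
    (hmean : slExp Θ (fun x => x) = 0) (hmean' : slExp Θ (fun x => -x) = 0)
    (φ : ℝ → ℝ) (hφb : ∃ C, ∀ x, |φ x| ≤ C)
    (hd1 : Differentiable ℝ φ) (hd2 : Differentiable ℝ (deriv φ))
    (hH : ∀ x y : ℝ, |deriv (deriv φ) x - deriv (deriv φ) y| ≤ K * |x - y| ^ α)
    (μ : Measure ℝ) (hμ : μ ∈ Θ) (hopt : ∫ x, φ x ∂μ = slExp Θ φ) :
    |(1/2) * deriv (deriv φ) 0 * (∫ x, x^2 ∂μ) -
        (1/2) * slExp Θ (fun y => deriv (deriv φ) 0 * y^2)| ≤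
      K * slExp Θ (fun x => |x| ^ (2 + α)) := by
  obtain ⟨hα0, hα1⟩ := hα
  obtain ⟨Cφ, hCφ⟩ := hφb
  set c := deriv (deriv φ) 0 with hc
  simp only [slExp] at hmean hmean' hopt ⊢
  obtain ⟨Cb, hCb⟩ := hbdd
  have hCb' : ∀ ν ∈ Θ, (∫ x, |x| ^ (2+α) ∂ν) ≤ Cb := fun ν hν => hCb ⟨ν, hν, rfl⟩
  -- integrability facts
  have hint_id : ∀ ν ∈ Θ, Integrable (fun y : ℝ => y) ν := by
    intro ν hν
    haveI := hprob ν hν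
    refine Integrable.mono' ((integrable_const 1).add (hint ν hν))
      aestronglyMeasurable_id (Filter.Eventually.of_forall fun y => ?_)
    simpa [Real.norm_eq_abs] using pt_abs_le hα0 y
  have hint_sq : ∀ ν ∈ Θ, Integrable (fun y : ℝ => y ^ 2) ν := by
    intro ν hν
    haveI := hprob ν hν
    refine Integrable.mono' ((integrable_const 1).add (hint ν hν))
      (continuous_pow 2).aestronglyMeasurable (Filter.Eventually.of_forall fun y => ?_)
    rw [Real.norm_eq_abs, abs_of_nonneg (sq_nonneg y)]
    exact pt_sq_le hα0 y
  have hint_φ : ∀ ν ∈ Θ, Integrable φ ν := by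
    intro ν hν
    haveI := hprob ν hν
    refine Integrable.mono' (integrable_const Cφ) hd1.continuous.aestronglyMeasurable
      (Filter.Eventually.of_forall fun y => ?_)
    simpa [Real.norm_eq_abs] using hCφ y
  have hone : ∀ ν ∈ Θ, (∫ _ : ℝ, (1:ℝ) ∂ν) = 1 := by
    intro ν hν
    haveI := hprob ν hν
    simp
  -- integral bounds
  have hsum_le : ∀ ν ∈ Θ, (∫ y, (1 + |y| ^ (2+α)) ∂ν) ≤ 1 + Cb := by
    intro ν hν
    haveI := hprob ν hν
    rw [integral_add (integrable_const 1) (hint ν hν), hone ν hν]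
    linarith [hCb' ν hν]
  have hId_le : ∀ ν ∈ Θ, (∫ y, y ∂ν) ≤ 1 + Cb := by
    intro ν hν
    haveI := hprob ν hν
    refine le_trans (integral_mono (hint_id ν hν) ((integrable_const 1).add (hint ν hν))
      (fun y => le_trans (le_abs_self y) (pt_abs_le hα0 y))) (hsum_le ν hν)
  have hnegId_le : ∀ ν ∈ Θ, (∫ y, -y ∂ν) ≤ 1 + Cb := by
    intro ν hν
    haveI := hprob ν hν
    refine le_trans (integral_mono ((hint_id ν hν).neg) ((integrable_const 1).add (hint ν hν))
      (fun y => le_trans (neg_le_abs y) (pt_abs_le hα0 y))) (hsum_le ν hν)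
  have hsq_le : ∀ ν ∈ Θ, (∫ y, y ^ 2 ∂ν) ≤ 1 + Cb := by
    intro ν hν
    haveI := hprob ν hν
    refine le_trans (integral_mono (hint_sq ν hν) ((integrable_const 1).add (hint ν hν))
      (fun y => pt_sq_le hα0 y)) (hsum_le ν hν)
  -- zero mean
  have hmean0 : ∀ ν ∈ Θ, (∫ y, y ∂ν) = 0 := by
    intro ν hν
    have b1 : BddAbove ((fun ν : Measure ℝ => ∫ x, x ∂ν) '' Θ) :=
      ⟨1 + Cb, by rintro _ ⟨ρ, hρ, rfl⟩; exact hId_le ρ hρ⟩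
    have b2 : BddAbove ((fun ν : Measure ℝ => ∫ x, -x ∂ν) '' Θ) :=
      ⟨1 + Cb, by rintro _ ⟨ρ, hρ, rfl⟩; exact hnegId_le ρ hρ⟩
    have le1 : (∫ x, x ∂ν) ≤ 0 := hmean ▸ le_csSup b1 ⟨ν, hν, rfl⟩
    have le2 : (∫ x, -x ∂ν) ≤ 0 := hmean' ▸ le_csSup b2 ⟨ν, hν, rfl⟩
    rw [integral_neg] at le2
    linarith
  -- integrated Taylor estimate
  have hT : ∀ ν ∈ Θ, |(∫ x, φ x ∂ν) - φ 0 - 1/2 * c * (∫ x, x ^ 2 ∂ν)| ≤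
      K / 2 * (∫ x, |x| ^ (2+α) ∂ν) := by
    intro ν hν
    haveI := hprob ν hν
    set f : ℝ → ℝ := fun y => φ y - φ 0 - deriv φ 0 * y - 1/2 * c * y ^ 2 with hf
    have hfi : Integrable f ν :=
      (((hint_φ ν hν).sub (integrable_const (φ 0))).sub
        ((hint_id ν hν).const_mul (deriv φ 0))).sub ((hint_sq ν hν).const_mul (1/2 * c))
    have hIf : (∫ y, f y ∂ν) = (∫ x, φ x ∂ν) - φ 0 - 1/2 * c * (∫ x, x ^ 2 ∂ν) := by
      have e1 : (∫ y, f y ∂ν) = (∫ y, (φ y - φ 0 - deriv φ 0 * y) ∂ν) -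
          ∫ y, 1/2 * c * y ^ 2 ∂ν :=
        integral_sub (((hint_φ ν hν).sub (integrable_const (φ 0))).sub
          ((hint_id ν hν).const_mul (deriv φ 0))) ((hint_sq ν hν).const_mul (1/2 * c))
      have e2 : (∫ y, (φ y - φ 0 - deriv φ 0 * y) ∂ν) = (∫ y, (φ y - φ 0) ∂ν) -
          ∫ y, deriv φ 0 * y ∂ν :=
        integral_sub ((hint_φ ν hν).sub (integrable_const (φ 0)))
          ((hint_id ν hν).const_mul (deriv φ 0))
      have e3 : (∫ y, (φ y - φ 0) ∂ν) = (∫ y, φ y ∂ν) - ∫ _ : ℝ, φ 0 ∂ν :=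
        integral_sub (hint_φ ν hν) (integrable_const (φ 0))
      have e4 : (∫ y, deriv φ 0 * y ∂ν) = deriv φ 0 * ∫ y, y ∂ν := integral_const_mul _ _
      have e5 : (∫ y, 1/2 * c * y ^ 2 ∂ν) = 1/2 * c * ∫ y, y ^ 2 ∂ν := integral_const_mul _ _
      have e6 : (∫ _ : ℝ, φ 0 ∂ν) = φ 0 := by simp
      rw [e1, e2, e3, e4, e5, e6, hmean0 ν hν]
      ring
    have h1 : |∫ y, f y ∂ν| ≤ ∫ y, |f y| ∂ν := by
      simpa [Real.norm_eq_abs] using norm_integral_le_integral_norm (μ := ν) f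
    have h2 : (∫ y, |f y| ∂ν) ≤ ∫ y, K / 2 * |y| ^ (2+α) ∂ν := by
      refine integral_mono hfi.abs ((hint ν hν).const_mul (K/2))
        (fun y => taylor_bound α K ⟨hα0, hα1⟩ hK φ hd1 hd2 hH y)
    rw [← hIf]
    calc |∫ y, f y ∂ν| ≤ ∫ y, K / 2 * |y| ^ (2+α) ∂ν := h1.trans h2
      _ = K / 2 * (∫ x, |x| ^ (2+α) ∂ν) := integral_const_mul _ _
  -- N and its properties
  set N := sSup ((fun ν : Measure ℝ => ∫ x, |x| ^ (2+α) ∂ν) '' Θ) with hN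
  have hJN : ∀ ν ∈ Θ, (∫ x, |x| ^ (2+α) ∂ν) ≤ N :=
    fun ν hν => le_csSup ⟨Cb, hCb⟩ ⟨ν, hν, rfl⟩
  have hN0 : 0 ≤ N := by
    obtain ⟨ν₀, hν₀⟩ := hne
    exact le_trans (integral_nonneg fun y => Real.rpow_nonneg (abs_nonneg y) _) (hJN ν₀ hν₀)
  -- the set S for the second sup
  have hS_eq : ∀ ν : Measure ℝ, (∫ y, c * y ^ 2 ∂ν) = c * ∫ y, y ^ 2 ∂ν :=
    fun ν => integral_const_mul c _
  have hSbdd : BddAbove ((fun ν : Measure ℝ => ∫ y, c * y ^ 2 ∂ν) '' Θ) := by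
    refine ⟨|c| * (1 + Cb), ?_⟩
    rintro _ ⟨ν, hν, rfl⟩
    haveI := hprob ν hν
    dsimp only
    rw [hS_eq ν]
    have h1 : |∫ y, y ^ 2 ∂ν| = ∫ y, y ^ 2 ∂ν :=
      abs_of_nonneg (integral_nonneg fun y => sq_nonneg y)
    calc c * ∫ y, y ^ 2 ∂ν ≤ |c * ∫ y, y ^ 2 ∂ν| := le_abs_self _
      _ = |c| * |∫ y, y ^ 2 ∂ν| := abs_mul _ _
      _ ≤ |c| * (1 + Cb) := by
          rw [h1]; exact mul_le_mul_of_nonneg_left (hsq_le ν hν) (abs_nonneg c)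
  have hAB : c * (∫ x, x ^ 2 ∂μ) ≤ sSup ((fun ν : Measure ℝ => ∫ y, c * y ^ 2 ∂ν) '' Θ) := by
    rw [← hS_eq μ]
    exact le_csSup hSbdd ⟨μ, hμ, rfl⟩
  -- E ν ≤ E μ
  have hEbdd : BddAbove ((fun ν : Measure ℝ => ∫ x, φ x ∂ν) '' Θ) := by
    refine ⟨Cφ, ?_⟩
    rintro _ ⟨ν, hν, rfl⟩
    haveI := hprob ν hν
    calc (∫ x, φ x ∂ν) ≤ ∫ _ : ℝ, Cφ ∂ν :=
          integral_mono (hint_φ ν hν) (integrable_const Cφ) (fun y => (abs_le.mp (hCφ y)).2)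
      _ = Cφ := by simp
  have hEle : ∀ ν ∈ Θ, (∫ x, φ x ∂ν) ≤ ∫ x, φ x ∂μ := by
    intro ν hν
    rw [hopt]
    exact le_csSup hEbdd ⟨ν, hν, rfl⟩
  -- sup bound
  have hsup_le : sSup ((fun ν : Measure ℝ => ∫ y, c * y ^ 2 ∂ν) '' Θ) ≤
      c * (∫ x, x ^ 2 ∂μ) + 2 * (K * N) := by
    refine csSup_le (hne.image _) ?_
    rintro _ ⟨ν, hν, rfl⟩
    dsimp only
    rw [hS_eq ν]
    have h1 := abs_le.mp (hT ν hν)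
    have h2 := abs_le.mp (hT μ hμ)
    have h3 := hEle ν hν
    have h4 := hJN ν hν
    have h5 := hJN μ hμ
    nlinarith [h1.1, h1.2, h2.1, h2.2]
  have hKN : 0 ≤ K * N := mul_nonneg hK hN0
  rw [abs_le]
  constructor
  · linarith
  · linarith
end

section
/- Two-sided sublinear expectation Taylor bound: with N, G, φ as in the Stein setup (N[x]=N[−x]=0, G(a)=(1/2)N[ax²]), one has |N[φ] − φ(0) − G(φ''(0))| ≤ (1/2)[φ'']_α · N[|x|^{2+α}]. -/
open MeasureTheory

section Aux

open Set

private lemma stein_stepA (α K : ℝ) (hα : α ∈ Set.Ioo (0:ℝ) 1) (hK : 0 ≤ K)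
    (φ : ℝ → ℝ) (hd2 : Differentiable ℝ (deriv φ))
    (hH : ∀ x y : ℝ, |deriv (deriv φ) x - deriv (deriv φ) y| ≤ K * |x - y| ^ α)
    (t : ℝ) :
    |deriv φ t - deriv φ 0 - deriv (deriv φ) 0 * t| ≤ K * |t| ^ (1 + α) := by
  set b2 := deriv (deriv φ) 0 with hb2
  set G : ℝ → ℝ := fun s => deriv φ s - deriv φ 0 - b2 * s with hG
  have hGd : ∀ s, HasDerivAt G (deriv (deriv φ) s - b2) s := by
    intro s
    have h1 : HasDerivAt (deriv φ) (deriv (deriv φ) s) s := (hd2 s).hasDerivAt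
    exact (h1.sub_const (deriv φ 0)).sub (((hasDerivAt_id s).const_mul b2).congr_deriv (mul_one b2))
  have key : ‖G t - G 0‖ ≤ (K * |t| ^ α) * ‖t - 0‖ := by
    apply Convex.norm_image_sub_le_of_norm_hasDerivWithin_le
      (f' := fun s => deriv (deriv φ) s - b2)
      (fun s hs => (hGd s).hasDerivWithinAt) ?_ (convex_uIcc 0 t)
      (left_mem_uIcc) (right_mem_uIcc)
    intro s hs
    have h1 : |deriv (deriv φ) s - b2| ≤ K * |s - 0| ^ α := hH s 0
    have h2 : |s| ≤ |t| := by
      rw [abs_le]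
      rcases mem_uIcc.1 hs with h | h <;>
        exact ⟨by linarith [neg_abs_le t, abs_nonneg t, h.1, h.2],
               by linarith [le_abs_self t, abs_nonneg t, h.1, h.2]⟩
    calc ‖deriv (deriv φ) s - b2‖ ≤ K * |s| ^ α := by simpa using h1
      _ ≤ K * |t| ^ α :=
          mul_le_mul_of_nonneg_left (Real.rpow_le_rpow (abs_nonneg s) h2 (le_of_lt hα.1)) hK
  have hG0 : G 0 = 0 := by simp [hG]
  have hk : |G t| ≤ K * |t| ^ α * |t| := by simpa [hG0] using key
  calc |deriv φ t - deriv φ 0 - b2 * t| = |G t| := rfl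
    _ ≤ K * |t| ^ α * |t| := hk
    _ = K * |t| ^ (1 + α) := by
        rcases eq_or_ne t 0 with rfl | ht
        · simp [Real.zero_rpow (show (1:ℝ)+α ≠ 0 by nlinarith [hα.1])]
        · rw [add_comm, Real.rpow_add' (abs_nonneg t) (by nlinarith [hα.1]), Real.rpow_one]
          ring

private lemma stein_fence (α K : ℝ) (hα : α ∈ Set.Ioo (0:ℝ) 1)
    (F F' : ℝ → ℝ) (hF0 : F 0 = 0) (hFd : ∀ t, HasDerivAt F (F' t) t)
    (b : ℝ) (hb : 0 ≤ b) (hbound : ∀ t ∈ Ico 0 b, |F' t| ≤ K * t ^ (1 + α)) :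
    |F b| ≤ K / (2 + α) * b ^ (2 + α) := by
  have h2α : (0:ℝ) < 2 + α := by nlinarith [hα.1]
  set B : ℝ → ℝ := fun t => K / (2 + α) * t ^ (2 + α) with hB
  have hBd : ∀ t, HasDerivAt B (K * t ^ (1 + α)) t := by
    intro t
    have h1 : HasDerivAt (fun t : ℝ => t ^ (2 + α)) ((2 + α) * t ^ (2 + α - 1)) t :=
      Real.hasDerivAt_rpow_const (Or.inr (by nlinarith [hα.1]))
    have := h1.const_mul (K / (2 + α))
    refine this.congr_deriv ?_
    rw [show (2:ℝ) + α - 1 = 1 + α by ring]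
    field_simp
  have key := image_norm_le_of_norm_deriv_right_le_deriv_boundary
    (f := F) (f' := F') (a := 0) (b := b)
    (fun t _ => (hFd t).continuousAt.continuousWithinAt)
    (fun t _ => (hFd t).hasDerivWithinAt)
    (B := B) (B' := fun t => K * t ^ (1 + α))
    (by simp [hF0, hB, Real.zero_rpow h2α.ne']) hBd
    (fun t ht => hbound t ht)
  simpa [hB] using key (right_mem_Icc.2 hb)

private lemma stein_taylor (α K : ℝ) (hα : α ∈ Set.Ioo (0:ℝ) 1) (hK : 0 ≤ K)
    (φ : ℝ → ℝ) (hd1 : Differentiable ℝ φ) (hd2 : Differentiable ℝ (deriv φ))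
    (hH : ∀ x y : ℝ, |deriv (deriv φ) x - deriv (deriv φ) y| ≤ K * |x - y| ^ α)
    (x : ℝ) :
    |φ x - φ 0 - deriv φ 0 * x - 1/2 * deriv (deriv φ) 0 * x ^ 2|
      ≤ 1/2 * K * |x| ^ (2 + α) := by
  set b1 := deriv φ 0
  set b2 := deriv (deriv φ) 0
  set g : ℝ → ℝ := fun y => φ y - φ 0 - b1 * y - 1/2 * b2 * y ^ 2 with hgdef
  set G : ℝ → ℝ := fun s => deriv φ s - b1 - b2 * s with hGdef
  have hgd : ∀ s, HasDerivAt g (G s) s := by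
    intro s
    have h1 : HasDerivAt φ (deriv φ s) s := (hd1 s).hasDerivAt
    have h2 : HasDerivAt (fun y : ℝ => φ 0 + b1 * y + 1/2 * b2 * y ^ 2)
        (b1 + 1/2 * b2 * (2 * s)) s := by
      have h3 : HasDerivAt (fun y : ℝ => b1 * y) b1 s := by
        simpa using (hasDerivAt_id s).const_mul b1
      exact (((hasDerivAt_const s (φ 0)).add h3).add
        ((hasDerivAt_pow 2 s).const_mul (1/2 * b2))).congr_deriv (by norm_num)
    have := h1.sub h2
    refine (this.congr_deriv ?_).congr_of_eventuallyEq (Filter.Eventually.of_forall fun y => ?_)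
    · simp [hGdef]; ring
    · simp [hgdef]; ring
  have hG0 : g 0 = 0 := by simp [hgdef]
  have hGb : ∀ s, |G s| ≤ K * |s| ^ (1 + α) := fun s => stein_stepA α K hα hK φ hd2 hH s
  have hcoef : K / (2 + α) ≤ 1/2 * K := by
    rw [div_le_iff₀ (by nlinarith [hα.1])]
    nlinarith [hα.1]
  have hfinal : |g x| ≤ K / (2 + α) * |x| ^ (2 + α) := by
    rcases le_or_gt 0 x with hx | hx
    · have := stein_fence α K hα g G hG0 hgd x hx (fun t ht => by
        calc |G t| ≤ K * |t| ^ (1 + α) := hGb t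
          _ = K * t ^ (1 + α) := by rw [abs_of_nonneg ht.1])
      rwa [abs_of_nonneg hx]
    · set F : ℝ → ℝ := fun t => g (-t) with hF
      have hFd : ∀ t, HasDerivAt F (-(G (-t))) t := by
        intro t
        have := (hgd (-t)).comp t (hasDerivAt_neg t)
        exact this.congr_deriv (mul_neg_one _)
      have := stein_fence α K hα F (fun t => -(G (-t))) (by simp [hF, hG0]) hFd (-x)
        (by linarith) (fun t ht => by
          calc |-(G (-t))| = |G (-t)| := abs_neg _
            _ ≤ K * |(-t)| ^ (1 + α) := hGb (-t)
            _ = K * t ^ (1 + α) := by rw [abs_neg, abs_of_nonneg ht.1])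
      have hxx : |x| = -x := abs_of_neg hx
      simpa [hF, hxx] using this
  calc |φ x - φ 0 - b1 * x - 1/2 * b2 * x ^ 2| = |g x| := rfl
    _ ≤ K / (2 + α) * |x| ^ (2 + α) := hfinal
    _ ≤ 1/2 * K * |x| ^ (2 + α) :=
        mul_le_mul_of_nonneg_right hcoef (Real.rpow_nonneg (abs_nonneg x) _)

private lemma stein_pbound (α : ℝ) (hα : α ∈ Set.Ioo (0:ℝ) 1) (x : ℝ) :
    |x| ≤ 1 + |x| ^ (2 + α) ∧ x ^ 2 ≤ 1 + |x| ^ (2 + α) := by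
  have hr : (0:ℝ) ≤ |x| ^ (2 + α) := Real.rpow_nonneg (abs_nonneg x) _
  rcases le_or_gt |x| 1 with h | h
  · constructor
    · linarith
    · have : x ^ 2 ≤ 1 := by
        rw [← sq_abs]; exact pow_le_one₀ (abs_nonneg x) h
      linarith
  · have h1 : 1 ≤ |x| := h.le
    constructor
    · calc |x| = |x| ^ (1:ℝ) := (Real.rpow_one _).symm
        _ ≤ |x| ^ (2 + α) :=
            Real.rpow_le_rpow_of_exponent_le h1 (by linarith [hα.1])
        _ ≤ 1 + |x| ^ (2 + α) := by linarith
    · have h2 : x ^ 2 = |x| ^ ((2:ℕ):ℝ) := by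
        rw [Real.rpow_natCast, sq_abs]
      calc x ^ 2 = |x| ^ ((2:ℕ):ℝ) := h2
        _ ≤ |x| ^ (2 + α) := Real.rpow_le_rpow_of_exponent_le h1
            (by push_cast; linarith [hα.1])
        _ ≤ 1 + |x| ^ (2 + α) := by linarith

end Aux

/-- two-sided sublinear Taylor bound
`|N[φ] − φ(0) − G(φ''(0))| ≤ (1/2)[φ'']_α N[|x|^{2+α}]` with `G(a) = (1/2)N[ax²]`. -/
theorem sublinear_taylor_bound (Θ : Set (Measure ℝ)) (hne : Θ.Nonempty)
    (hprob : ∀ μ ∈ Θ, IsProbabilityMeasure μ)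
    (α K : ℝ) (hα : α ∈ Set.Ioo (0:ℝ) 1) (hK : 0 ≤ K)
    (hint : ∀ μ ∈ Θ, Integrable (fun x => |x| ^ (2 + α)) μ)
    (hbdd : BddAbove ((fun μ => ∫ x, |x| ^ (2 + α) ∂μ) '' Θ))
    (hmean : slExp Θ (fun x => x) = 0) (hmean' : slExp Θ (fun x => -x) = 0)
    (φ : ℝ → ℝ) (hφb : ∃ C, ∀ x, |φ x| ≤ C)
    (hd1 : Differentiable ℝ φ) (hd2 : Differentiable ℝ (deriv φ))
    (hH : ∀ x y : ℝ, |deriv (deriv φ) x - deriv (deriv φ) y| ≤ K * |x - y| ^ α) :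
    |slExp Θ φ - φ 0 - (1/2) * slExp Θ (fun y => deriv (deriv φ) 0 * y^2)| ≤
      (1/2) * K * slExp Θ (fun x => |x| ^ (2 + α)) := by
  obtain ⟨C, hC⟩ := hφb
  set b1 := deriv φ 0 with hb1
  set b2 := deriv (deriv φ) 0 with hb2
  set g : ℝ → ℝ := fun y => φ y - φ 0 - b1 * y - 1/2 * b2 * y ^ 2 with hg
  have htay : ∀ x, |g x| ≤ 1/2 * K * |x| ^ (2 + α) :=
    stein_taylor α K hα hK φ hd1 hd2 hH
  obtain ⟨M, hM⟩ := hbdd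
  have hMle : ∀ μ ∈ Θ, ∫ x, |x| ^ (2 + α) ∂μ ≤ M := fun μ hμ => hM ⟨μ, hμ, rfl⟩
  -- integrability facts
  have hints : ∀ μ ∈ Θ, Integrable (fun x : ℝ => x) μ ∧ Integrable (fun x : ℝ => x ^ 2) μ
      ∧ Integrable φ μ ∧ Integrable g μ := by
    intro μ hμ
    haveI := hprob μ hμ
    have h1 : Integrable (fun x : ℝ => 1 + |x| ^ (2 + α)) μ :=
      (integrable_const 1).add (hint μ hμ)
    have hx : Integrable (fun x : ℝ => x) μ := by
      refine h1.mono' aestronglyMeasurable_id ?_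
      filter_upwards with x
      simpa [Real.norm_eq_abs] using (stein_pbound α hα x).1
    have hx2 : Integrable (fun x : ℝ => x ^ 2) μ := by
      refine h1.mono' (continuous_pow 2).aestronglyMeasurable ?_
      filter_upwards with x
      rw [Real.norm_eq_abs, abs_of_nonneg (sq_nonneg x)]
      exact (stein_pbound α hα x).2
    have hφi : Integrable φ μ := by
      refine (integrable_const C).mono' hd1.continuous.aestronglyMeasurable ?_
      filter_upwards with x
      simpa [Real.norm_eq_abs] using hC x
    have hgi : Integrable g μ :=
      ((hφi.sub (integrable_const (φ 0))).sub (hx.const_mul b1)).sub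
        (hx2.const_mul (1/2 * b2))
    exact ⟨hx, hx2, hφi, hgi⟩
  -- means are zero
  simp only [slExp] at hmean hmean' ⊢
  have hxabs : ∀ μ ∈ Θ, |∫ x, (x:ℝ) ∂μ| ≤ 1 + M := by
    intro μ hμ
    haveI := hprob μ hμ
    obtain ⟨hx, -, -, -⟩ := hints μ hμ
    calc |∫ x, (x:ℝ) ∂μ| ≤ ∫ x, |x| ∂μ := by
          simpa [Real.norm_eq_abs] using norm_integral_le_integral_norm (fun x : ℝ => x) (μ := μ)
      _ ≤ ∫ x, (1 + |x| ^ (2 + α)) ∂μ :=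
          integral_mono hx.abs ((integrable_const 1).add (hint μ hμ))
            (fun x => (stein_pbound α hα x).1)
      _ = 1 + ∫ x, |x| ^ (2 + α) ∂μ := by
          rw [integral_add (integrable_const 1) (hint μ hμ)]; simp
      _ ≤ 1 + M := by linarith [hMle μ hμ]
  have hmean0 : ∀ μ ∈ Θ, ∫ x, (x:ℝ) ∂μ = 0 := by
    intro μ hμ
    have hbx : BddAbove ((fun μ => ∫ x, (x:ℝ) ∂μ) '' Θ) := by
      refine ⟨1 + M, ?_⟩
      rintro r ⟨ν, hν, rfl⟩
      exact le_trans (le_abs_self _) (hxabs ν hν)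
    have hbnx : BddAbove ((fun μ => ∫ x, (-x:ℝ) ∂μ) '' Θ) := by
      refine ⟨1 + M, ?_⟩
      rintro r ⟨ν, hν, rfl⟩
      show ∫ x, (-x:ℝ) ∂ν ≤ 1 + M
      rw [integral_neg]
      calc -∫ x, (x:ℝ) ∂ν ≤ |∫ x, (x:ℝ) ∂ν| := neg_le_abs _
        _ ≤ 1 + M := hxabs ν hν
    have h1 : ∫ x, (x:ℝ) ∂μ ≤ 0 := hmean ▸ le_csSup hbx ⟨μ, hμ, rfl⟩
    have h2 : ∫ x, (-x:ℝ) ∂μ ≤ 0 := hmean' ▸ le_csSup hbnx ⟨μ, hμ, rfl⟩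
    rw [integral_neg] at h2
    linarith
  -- key identity per measure
  have hkey : ∀ μ ∈ Θ, ∫ x, g x ∂μ
      = (∫ x, φ x ∂μ) - φ 0 - 1/2 * ∫ y, b2 * y ^ 2 ∂μ := by
    intro μ hμ
    haveI := hprob μ hμ
    obtain ⟨hx, hx2, hφi, hgi⟩ := hints μ hμ
    have e3 := integral_sub hφi (integrable_const (φ 0))
    have e2 := integral_sub (hφi.sub (integrable_const (φ 0))) (hx.const_mul b1)
    have e1 := integral_sub ((hφi.sub (integrable_const (φ 0))).sub (hx.const_mul b1))
      (hx2.const_mul (1/2 * b2))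
    simp only [Pi.sub_apply] at e1 e2
    have hq1 : ∫ x, b1 * x ∂μ = 0 := by
      rw [integral_const_mul, hmean0 μ hμ, mul_zero]
    have hq2 : ∫ x, 1/2 * b2 * x ^ 2 ∂μ = 1/2 * ∫ y, b2 * y ^ 2 ∂μ := by
      rw [integral_const_mul, integral_const_mul]
      ring
    calc ∫ x, g x ∂μ
        = ∫ x, (φ x - φ 0 - b1 * x - 1/2 * b2 * x ^ 2) ∂μ := rfl
      _ = (∫ x, (φ x - φ 0 - b1 * x) ∂μ) - ∫ x, 1/2 * b2 * x ^ 2 ∂μ := e1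
      _ = (∫ x, (φ x - φ 0) ∂μ) - (∫ x, b1 * x ∂μ) - ∫ x, 1/2 * b2 * x ^ 2 ∂μ := by rw [e2]
      _ = (∫ x, φ x ∂μ) - φ 0 - 1/2 * ∫ y, b2 * y ^ 2 ∂μ := by
          rw [e3, hq1, hq2]; simp
  -- per-measure bounds
  have hgbd : ∀ μ ∈ Θ, |∫ x, g x ∂μ| ≤ 1/2 * K * ∫ x, |x| ^ (2 + α) ∂μ := by
    intro μ hμ
    obtain ⟨-, -, -, hgi⟩ := hints μ hμ
    calc |∫ x, g x ∂μ| ≤ ∫ x, |g x| ∂μ := by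
          simpa [Real.norm_eq_abs] using norm_integral_le_integral_norm g (μ := μ)
      _ ≤ ∫ x, 1/2 * K * |x| ^ (2 + α) ∂μ :=
          integral_mono hgi.abs ((hint μ hμ).const_mul _) htay
      _ = 1/2 * K * ∫ x, |x| ^ (2 + α) ∂μ := integral_const_mul _ _
  have hSnn : ∀ μ ∈ Θ, 0 ≤ ∫ x, |x| ^ (2 + α) ∂μ := by
    intro μ hμ
    exact integral_nonneg fun x => Real.rpow_nonneg (abs_nonneg x) _
  -- bounded-above of the relevant image sets
  have hbφ : BddAbove ((fun μ => ∫ x, φ x ∂μ) '' Θ) := by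
    refine ⟨C, ?_⟩
    rintro r ⟨ν, hν, rfl⟩
    haveI := hprob ν hν
    obtain ⟨-, -, hφi, -⟩ := hints ν hν
    calc ∫ x, φ x ∂ν ≤ ∫ _x, C ∂ν :=
        integral_mono hφi (integrable_const C) (fun x => (abs_le.1 (hC x)).2)
      _ = C := by simp
  have hbq : BddAbove ((fun μ => ∫ y, b2 * y ^ 2 ∂μ) '' Θ) := by
    refine ⟨|b2| * (1 + M), ?_⟩
    rintro r ⟨ν, hν, rfl⟩
    haveI := hprob ν hν
    obtain ⟨-, hx2, -, -⟩ := hints ν hν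
    have h1 : ∫ x, (x:ℝ) ^ 2 ∂ν ≤ 1 + M := by
      calc ∫ x, (x:ℝ) ^ 2 ∂ν ≤ ∫ x, (1 + |x| ^ (2 + α)) ∂ν :=
          integral_mono hx2 ((integrable_const 1).add (hint ν hν))
            (fun x => (stein_pbound α hα x).2)
        _ = 1 + ∫ x, |x| ^ (2 + α) ∂ν := by
            rw [integral_add (integrable_const 1) (hint ν hν)]; simp
        _ ≤ 1 + M := by linarith [hMle ν hν]
    have h2 : 0 ≤ ∫ x, (x:ℝ) ^ 2 ∂ν := integral_nonneg fun x => sq_nonneg x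
    show ∫ y, b2 * y ^ 2 ∂ν ≤ |b2| * (1 + M)
    rw [integral_const_mul]
    nlinarith [le_abs_self b2, abs_nonneg b2]
  have hbs : BddAbove ((fun μ => ∫ x, |x| ^ (2 + α) ∂μ) '' Θ) := ⟨M, hM⟩
  -- names for the three suprema
  set F := sSup ((fun μ => ∫ x, φ x ∂μ) '' Θ) with hF
  set Q := sSup ((fun μ => ∫ y, b2 * y ^ 2 ∂μ) '' Θ) with hQ
  set S := sSup ((fun μ => ∫ x, |x| ^ (2 + α) ∂μ) '' Θ) with hS
  have hSle : ∀ μ ∈ Θ, ∫ x, |x| ^ (2 + α) ∂μ ≤ S :=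
    fun μ hμ => le_csSup hbs ⟨μ, hμ, rfl⟩
  have hSnn' : 0 ≤ S := by
    obtain ⟨μ, hμ⟩ := hne
    exact le_trans (hSnn μ hμ) (hSle μ hμ)
  have hFub : F ≤ φ 0 + 1/2 * Q + 1/2 * K * S := by
    apply csSup_le (hne.image _)
    rintro r ⟨μ, hμ, rfl⟩
    have h1 := hkey μ hμ
    have h2 := hgbd μ hμ
    have h3 : ∫ y, b2 * y ^ 2 ∂μ ≤ Q := le_csSup hbq ⟨μ, hμ, rfl⟩
    have h4 : 1/2 * K * ∫ x, |x| ^ (2 + α) ∂μ ≤ 1/2 * K * S :=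
      mul_le_mul_of_nonneg_left (hSle μ hμ) (by linarith)
    have h5 := (abs_le.1 h2).2
    linarith
  have hQub : Q ≤ 2 * (F - φ 0 + 1/2 * K * S) := by
    apply csSup_le (hne.image _)
    rintro r ⟨μ, hμ, rfl⟩
    have h1 := hkey μ hμ
    have h2 := hgbd μ hμ
    have h3 : ∫ x, φ x ∂μ ≤ F := le_csSup hbφ ⟨μ, hμ, rfl⟩
    have h4 : 1/2 * K * ∫ x, |x| ^ (2 + α) ∂μ ≤ 1/2 * K * S :=
      mul_le_mul_of_nonneg_left (hSle μ hμ) (by linarith)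
    have h5 := (abs_le.1 h2).1
    linarith
  rw [abs_le]
  constructor <;> linarith
end
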